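/- Let E_m(f) = Σ_{x∼_m y} (f(x) − f(y))² denote the level-m graph energy on the Sierpinski gasket approximations and suppose (5/3)^m E_m(f) is non-decreasing in m (standard fact). If a : V_* → ℂ is bounded with Σ over edges (5/3)^m Σ_{x∼_m y} |a_m(e_{xy})|² ≤ M < ∞ for all m, then: (5/3)^m E^{a_m}_m(f) is bounded as m → ∞ if and only if (5/3)^m E_m(f) is bounded, where E^{a_m}_m(f) = Σ_{x∼_m y} |f(x) − f(y)e^{i a_m(e_{xy})}|². -/

import Mathlib

open Finset Complex

lemma abs_exp_I_sub_one_sq (t : ℝ) :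
    ‖Complex.exp (Complex.I * t) - 1‖ ^ 2 ≤ t ^ 2 := by
  have h : Complex.exp (Complex.I * t) = Complex.exp (t * Complex.I) := by ring_nf
  rw [h, Complex.exp_mul_I]
  have h2 : ‖Complex.cos t + Complex.sin t * Complex.I - 1‖ ^ 2
      = (Real.cos t - 1) ^ 2 + (Real.sin t) ^ 2 := by
    rw [← Complex.ofReal_cos, ← Complex.ofReal_sin, Complex.sq_norm]
    simp [Complex.normSq_apply, Complex.cos_ofReal_re, Complex.sin_ofReal_re]
    ring
  rw [h2]
  have hc := Real.one_sub_sq_div_two_le_cos (x := t)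
  nlinarith [Real.sin_sq_add_cos_sq t, Real.cos_le_one t]

lemma key (u v : ℂ) (t S : ℝ) (hv : ‖v‖ ≤ S)
    (z w : ℂ) (hz : ‖z‖ ≤ ‖w‖ + ‖v * (Complex.exp (Complex.I * t) - 1)‖) :
    ‖z‖ ^ 2 ≤ 2 * ‖w‖ ^ 2 + 2 * S ^ 2 * t ^ 2 := by
  have hS : 0 ≤ S := le_trans (norm_nonneg v) hv
  have hd : ‖v * (Complex.exp (Complex.I * t) - 1)‖ ^ 2 ≤ S ^ 2 * t ^ 2 := by
    rw [norm_mul, mul_pow]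
    have := abs_exp_I_sub_one_sq t
    have h1 : ‖v‖ ^ 2 ≤ S ^ 2 := by
      nlinarith [norm_nonneg v]
    nlinarith [norm_nonneg (Complex.exp (Complex.I * t) - 1), sq_nonneg t]
  nlinarith [norm_nonneg z, norm_nonneg w,
    norm_nonneg (v * (Complex.exp (Complex.I * t) - 1)),
    sq_nonneg (‖w‖ - ‖v * (Complex.exp (Complex.I * t) - 1)‖)]

theorem stmt_19 {V : Type*} (ι : ℕ → Type*) [∀ m, Fintype (ι m)]
    (p q : ∀ m, ι m → V) (f : V → ℂ) (S : ℝ) (hS : ∀ v, ‖f v‖ ≤ S)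
    (a : ∀ m, ι m → ℝ) (M : ℝ)
    (hM : ∀ m, (5 / 3 : ℝ) ^ m * ∑ e : ι m, (a m e) ^ 2 ≤ M) :
    (∃ K : ℝ, ∀ m, (5 / 3 : ℝ) ^ m *
        ∑ e : ι m, ‖f (p m e)
          - f (q m e) * Complex.exp (Complex.I * (a m e : ℝ))‖ ^ 2 ≤ K) ↔
      (∃ K : ℝ, ∀ m, (5 / 3 : ℝ) ^ m *
        ∑ e : ι m, ‖f (p m e) - f (q m e)‖ ^ 2 ≤ K) := by
  have hc : ∀ m : ℕ, (0:ℝ) < (5/3:ℝ)^m := fun m => by positivity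
  constructor
  · rintro ⟨K, hK⟩
    refine ⟨2 * K + 2 * S ^ 2 * M, fun m => ?_⟩
    have hterm : ∀ e : ι m, ‖f (p m e) - f (q m e)‖ ^ 2 ≤
        2 * ‖f (p m e) - f (q m e) * Complex.exp (Complex.I * (a m e : ℝ))‖ ^ 2
          + 2 * S ^ 2 * (a m e) ^ 2 := by
      intro e
      apply key (f (p m e)) (f (q m e)) (a m e) S (hS _)
      have : f (p m e) - f (q m e) =
          (f (p m e) - f (q m e) * Complex.exp (Complex.I * (a m e : ℝ)))
            + f (q m e) * (Complex.exp (Complex.I * (a m e : ℝ)) - 1) := by ring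
      rw [this]; exact norm_add_le _ _
    have hsum := Finset.sum_le_sum (s := (Finset.univ : Finset (ι m))) (fun e _ => hterm e)
    have := mul_le_mul_of_nonneg_left hsum (le_of_lt (hc m))
    rw [Finset.sum_add_distrib, ← Finset.mul_sum, ← Finset.mul_sum] at this
    have hM' := hM m
    have hK' := hK m
    have hSnn : (0:ℝ) ≤ S ^ 2 := sq_nonneg S
    nlinarith [hc m]
  · rintro ⟨K, hK⟩
    refine ⟨2 * K + 2 * S ^ 2 * M, fun m => ?_⟩
    have hterm : ∀ e : ι m,
        ‖f (p m e) - f (q m e) * Complex.exp (Complex.I * (a m e : ℝ))‖ ^ 2 ≤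
        2 * ‖f (p m e) - f (q m e)‖ ^ 2 + 2 * S ^ 2 * (a m e) ^ 2 := by
      intro e
      apply key (f (p m e)) (f (q m e)) (a m e) S (hS _)
      have : f (p m e) - f (q m e) * Complex.exp (Complex.I * (a m e : ℝ)) =
          (f (p m e) - f (q m e))
            - f (q m e) * (Complex.exp (Complex.I * (a m e : ℝ)) - 1) := by ring
      rw [this]
      exact norm_sub_le _ _
    have hsum := Finset.sum_le_sum (s := (Finset.univ : Finset (ι m))) (fun e _ => hterm e)
    have := mul_le_mul_of_nonneg_left hsum (le_of_lt (hc m))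
    rw [Finset.sum_add_distrib, ← Finset.mul_sum, ← Finset.mul_sum] at this
    have hM' := hM m
    have hK' := hK m
    have hSnn : (0:ℝ) ≤ S ^ 2 := sq_nonneg S
    nlinarith [hc m]
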